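/- arXiv:1303.4818 — 5 statements merged into one kernel-verified Lean document; each statement's English description precedes it below -/
import Mathlib

section
/- For any field K of characteristic 0 and any positive integer k, the set of elements of K expressible as a sum of k-th powers of totally positive elements of K equals the set of elements expressible as a sum of 2k-th powers of elements of K. -/
open Finset Set MeasureTheory

namespace TP
set_option linter.unusedSectionVars false
set_option linter.deprecated false
set_option maxHeartbeats 1600000

/-- `Λ m = (2m)! / (4^m m!)`, the normalized Gaussian moment. -/
def Lam (m : ℕ) : ℚ := (Nat.factorial (2*m) : ℚ) / (4 ^ m * (Nat.factorial m : ℚ))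

lemma Lam_pos (m : ℕ) : 0 < Lam m := by
  apply div_pos
  · exact_mod_cast Nat.factorial_pos _
  · have : (0:ℚ) < (Nat.factorial m : ℚ) := by exact_mod_cast Nat.factorial_pos m
    positivity

lemma Lam_zero : Lam 0 = 1 := by simp [Lam]

lemma Lam_succ (m : ℕ) : Lam (m+1) = ((m:ℚ) + 1/2) * Lam m := by
  unfold Lam
  have h2 : 2*(m+1) = (2*m+1)+1 := by ring
  rw [h2, Nat.factorial_succ, Nat.factorial_succ, Nat.factorial_succ]
  have hf : (Nat.factorial m : ℚ) ≠ 0 := by exact_mod_cast (Nat.factorial_pos m).ne'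
  have hf2 : (Nat.factorial (2*m) : ℚ) ≠ 0 := by exact_mod_cast (Nat.factorial_pos (2*m)).ne'
  push_cast
  field_simp
  ring

lemma Lam_id {i m : ℕ} (h : i ≤ m) :
    ((2*m).choose (2*i) : ℚ) * (Lam i * Lam (m-i)) = (m.choose i : ℚ) * Lam m := by
  have h2 : 2*i ≤ 2*m := by omega
  rw [Nat.cast_choose ℚ h, Nat.cast_choose ℚ h2]
  unfold Lam
  have e1 : 2*m - 2*i = 2*(m-i) := by omega
  rw [e1]
  have h4 : (4:ℚ)^m = 4^i * 4^(m-i) := by rw [← pow_add]; congr 1; omega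
  rw [h4]
  have f0 : ∀ j : ℕ, (Nat.factorial j : ℚ) ≠ 0 := fun j => by
    exact_mod_cast (Nat.factorial_pos j).ne'
  have g0 : (4:ℚ) ≠ 0 := by norm_num
  field_simp

lemma GammaHalf (m : ℕ) : Real.Gamma ((m:ℝ) + 1/2) = (Lam m : ℝ) * Real.sqrt Real.pi := by
  induction m with
  | zero =>
      rw [show ((0:ℕ):ℝ) + 1/2 = 1/2 by norm_num, Real.Gamma_one_half_eq, Lam_zero]
      norm_num
  | succ m ih =>
      have h1 : ((m+1 : ℕ):ℝ) + 1/2 = ((m:ℝ) + 1/2) + 1 := by push_cast; ring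
      have h2 : ((m:ℝ) + 1/2) ≠ 0 := by positivity
      rw [h1, Real.Gamma_add_one h2, ih, Lam_succ]
      push_cast
      ring

lemma mom_int (m : ℕ) :
    IntegrableOn (fun t : ℝ => Real.exp (-t) * t ^ ((m:ℝ) + 1/2 - 1)) (Ioi 0) :=
  Real.GammaIntegral_convergent (by positivity)

lemma mom_val (m : ℕ) :
    ∫ t in Ioi (0:ℝ), Real.exp (-t) * t ^ ((m:ℝ) + 1/2 - 1) = (Lam m : ℝ) * Real.sqrt Real.pi := by
  rw [← Real.Gamma_eq_integral (by positivity : (0:ℝ) < (m:ℝ) + 1/2), GammaHalf]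

lemma poly_moment_pos {n : ℕ} (c : Fin (n+1) → ℝ) (hc : c ≠ 0)
    (hnn : ∀ t : ℝ, 0 ≤ t → 0 ≤ ∑ m, c m * t ^ (m : ℕ)) :
    0 < ∑ m, c m * (Lam (m:ℕ) : ℝ) := by
  set g : ℝ → ℝ := fun t => (∑ m : Fin (n+1), c m * t ^ (m:ℕ)) * (Real.exp (-t) * t ^ (-(1:ℝ)/2))
    with hg
  have hgeq : ∀ t ∈ Ioi (0:ℝ), g t
      = ∑ m : Fin (n+1), c m * (Real.exp (-t) * t ^ ((m:ℝ) + 1/2 - 1)) := by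
    intro t ht
    have ht' : (0:ℝ) < t := ht
    rw [hg]
    simp only
    rw [Finset.sum_mul]
    refine Finset.sum_congr rfl fun m _ => ?_
    rw [show ((m:ℝ) + 1/2 - 1) = ((m:ℕ):ℝ) + (-(1:ℝ)/2) by push_cast; ring]
    rw [Real.rpow_add ht', Real.rpow_natCast]
    ring
  have hint0 : IntegrableOn
      (fun t => ∑ m : Fin (n+1), c m * (Real.exp (-t) * t ^ ((m:ℝ) + 1/2 - 1))) (Ioi 0) :=
    integrable_finset_sum _ (fun m _ => (mom_int (m:ℕ)).const_mul (c m))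
  have hint : IntegrableOn g (Ioi 0) :=
    IntegrableOn.congr_fun hint0 (fun t ht => (hgeq t ht).symm) measurableSet_Ioi
  have hval : ∫ t in Ioi (0:ℝ), g t = (∑ m : Fin (n+1), c m * (Lam (m:ℕ):ℝ)) * Real.sqrt Real.pi := by
    rw [setIntegral_congr_fun measurableSet_Ioi hgeq]
    have hswap := MeasureTheory.integral_finset_sum (μ := volume.restrict (Ioi 0))
      (univ : Finset (Fin (n+1)))
      (f := fun m t => c m * (Real.exp (-t) * t ^ ((m:ℝ) + 1/2 - 1)))
      (fun m _ => (mom_int (m:ℕ)).const_mul (c m))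
    rw [hswap, Finset.sum_mul]
    refine Finset.sum_congr rfl fun m _ => ?_
    rw [MeasureTheory.integral_const_mul, mom_val]
    ring
  have hnn' : 0 ≤ᵐ[volume.restrict (Ioi 0)] g := by
    refine (ae_restrict_iff' measurableSet_Ioi).mpr ?_
    filter_upwards with t ht
    have ht' : (0:ℝ) < t := ht
    have h1 : 0 ≤ ∑ m : Fin (n+1), c m * t ^ (m:ℕ) := hnn t ht'.le
    have h2 : (0:ℝ) < Real.exp (-t) * t ^ (-(1:ℝ)/2) := by positivity
    simpa [hg] using mul_nonneg h1 h2.le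
  have hine : 0 ≤ ∫ t in Ioi (0:ℝ), g t := integral_nonneg_of_ae hnn'
  rcases eq_or_lt_of_le hine with heq | hlt
  · exfalso
    have hzero : g =ᵐ[volume.restrict (Ioi 0)] 0 :=
      (integral_eq_zero_iff_of_nonneg_ae hnn' hint).mp heq.symm
    set P : Polynomial ℝ := ∑ m : Fin (n+1), Polynomial.C (c m) * Polynomial.X ^ (m:ℕ) with hP
    have hPeval : ∀ t : ℝ, P.eval t = ∑ m : Fin (n+1), c m * t ^ (m:ℕ) := by
      intro t
      rw [hP, Polynomial.eval_finset_sum]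
      simp
    have hPne : P ≠ 0 := by
      obtain ⟨m₀, hm₀⟩ : ∃ m, c m ≠ 0 := by
        by_contra h; push_neg at h; exact hc (funext h)
      intro h0
      apply hm₀
      have hco : P.coeff (m₀ : ℕ) = c m₀ := by
        rw [hP, Polynomial.finset_sum_coeff]
        rw [Finset.sum_eq_single m₀]
        · simp [Polynomial.coeff_C_mul, Polynomial.coeff_X_pow]
        · intro b _ hb
          simp only [Polynomial.coeff_C_mul, Polynomial.coeff_X_pow]
          rw [if_neg, mul_zero]
          intro h
          exact hb (Fin.ext h.symm)
        · intro h; exact absurd (Finset.mem_univ m₀) h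
      rw [← hco, h0, Polynomial.coeff_zero]
    have hroots : Set.Finite {x : ℝ | P.IsRoot x} := P.finite_setOf_isRoot hPne
    have hsub : (Ioi (0:ℝ) \ {x | P.IsRoot x}) ⊆ {t | g t ≠ 0} := by
      rintro t ⟨ht, hroot⟩
      have htpos : (0:ℝ) < t := ht
      have h1 : (∑ m : Fin (n+1), c m * t ^ (m:ℕ)) ≠ 0 := by
        rw [← hPeval]; exact hroot
      have h2 : Real.exp (-t) * t ^ (-(1:ℝ)/2) ≠ 0 := by positivity
      exact mul_ne_zero h1 h2
    have hnull : volume.restrict (Ioi 0) {t | g t ≠ 0} = 0 := by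
      have h := hzero
      rw [Filter.EventuallyEq, ae_iff] at h
      simpa using h
    have hms : MeasurableSet (Ioi (0:ℝ) \ {x | P.IsRoot x}) :=
      measurableSet_Ioi.diff hroots.measurableSet
    have hlarge : volume.restrict (Ioi 0) (Ioi (0:ℝ) \ {x | P.IsRoot x}) = ⊤ := by
      rw [Measure.restrict_apply hms]
      have hinter : (Ioi (0:ℝ) \ {x | P.IsRoot x}) ∩ Ioi 0 = Ioi (0:ℝ) \ {x | P.IsRoot x} :=
        inter_eq_left.mpr diff_subset
      rw [hinter, measure_diff_null (hroots.measure_zero _), Real.volume_Ioi]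
    have hmono := measure_mono (μ := volume.restrict (Ioi 0)) hsub
    rw [hnull, hlarge] at hmono
    simp at hmono
  · rw [hval] at hlt
    have hpi : 0 < Real.sqrt Real.pi := Real.sqrt_pos.mpr Real.pi_pos
    by_contra h
    push_neg at h
    nlinarith
section Cone
variable (n : ℕ)

abbrev Ee (n : ℕ) := Fin (n+1) → ℝ

def rv (v : Fin (n+1) → ℚ) : Ee n := fun m => ((v m : ℚ) : ℝ)
def vqv (σ : ℚ) : Fin (n+1) → ℚ := fun m => σ ^ (2 * (m:ℕ))
def enq : Fin (n+1) → ℚ := fun m => if (m:ℕ) = n then 1 else 0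
def Gens : Set (Ee n) := (Set.range fun σ : ℚ => rv n (vqv n σ)) ∪ {rv n (enq n)}
def Cone : Set (Ee n) :=
  {x | ∃ (M : ℕ) (w : Fin M → ℝ) (g : Fin M → Ee n),
      (∀ j, 0 ≤ w j) ∧ (∀ j, g j ∈ Gens n) ∧ x = ∑ j, w j • g j}

lemma zero_mem_cone : (0 : Ee n) ∈ Cone n :=
  ⟨0, fun j => j.elim0, fun j => j.elim0, fun j => j.elim0, fun j => j.elim0, by simp⟩

lemma gen_mem_cone {g : Ee n} (hg : g ∈ Gens n) : g ∈ Cone n :=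
  ⟨1, fun _ => 1, fun _ => g, fun _ => zero_le_one, fun _ => hg, by simp⟩

lemma smul_mem_cone {c : ℝ} (hc : 0 ≤ c) {x : Ee n} (hx : x ∈ Cone n) : c • x ∈ Cone n := by
  obtain ⟨M, w, g, hw, hg, rfl⟩ := hx
  refine ⟨M, fun j => c * w j, g, fun j => mul_nonneg hc (hw j), hg, ?_⟩
  rw [Finset.smul_sum]
  exact Finset.sum_congr rfl fun j _ => by rw [smul_smul]

lemma add_mem_cone {x y : Ee n} (hx : x ∈ Cone n) (hy : y ∈ Cone n) : x + y ∈ Cone n := by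
  obtain ⟨M₁, w₁, g₁, hw₁, hg₁, rfl⟩ := hx
  obtain ⟨M₂, w₂, g₂, hw₂, hg₂, rfl⟩ := hy
  refine ⟨M₁ + M₂, Fin.append w₁ w₂, Fin.append g₁ g₂, ?_, ?_, ?_⟩
  · intro j
    refine Fin.addCases (fun i => ?_) (fun i => ?_) j
    · rw [Fin.append_left]; exact hw₁ i
    · rw [Fin.append_right]; exact hw₂ i
  · intro j
    refine Fin.addCases (fun i => ?_) (fun i => ?_) j
    · rw [Fin.append_left]; exact hg₁ i
    · rw [Fin.append_right]; exact hg₂ i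
  · rw [Fin.sum_univ_add]
    congr 1
    · refine Finset.sum_congr rfl fun i _ => ?_
      rw [Fin.append_left, Fin.append_left]
    · refine Finset.sum_congr rfl fun i _ => ?_
      rw [Fin.append_right, Fin.append_right]

lemma cone_convex : Convex ℝ (Cone n) := by
  intro x hx y hy a b ha hb _
  exact add_mem_cone n (smul_mem_cone n ha hx) (smul_mem_cone n hb hy)

def dotv (c x : Ee n) : ℝ := ∑ m, c m * x m

lemma dotv_smul (c : Ee n) (a : ℝ) (y : Ee n) : dotv n c (a • y) = a * dotv n c y := by
  unfold dotv
  rw [Finset.mul_sum]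
  exact Finset.sum_congr rfl fun m _ => by simp [Pi.smul_apply]; ring

lemma dotv_sub (c x y : Ee n) : dotv n c (x - y) = dotv n c x - dotv n c y := by
  unfold dotv
  rw [← Finset.sum_sub_distrib]
  exact Finset.sum_congr rfl fun m _ => by simp [Pi.sub_apply]; ring

lemma dotv_zero_left (x : Ee n) : dotv n 0 x = 0 := by simp [dotv]

lemma dotv_smul_left (a : ℝ) (c x : Ee n) : dotv n (a • c) x = a * dotv n c x := by
  unfold dotv
  rw [Finset.mul_sum]
  exact Finset.sum_congr rfl fun m _ => by simp [Pi.smul_apply]; ring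

lemma dotv_cont (y : Ee n) : Continuous fun c : Ee n => dotv n c y := by
  unfold dotv
  exact continuous_finset_sum _ fun m _ => (continuous_apply m).mul continuous_const

lemma clm_eq_dotv (f : Ee n →L[ℝ] ℝ) (y : Ee n) :
    f y = dotv n (fun m => f (Pi.single m 1)) y := by
  have hy : y = ∑ m, y m • (Pi.single m (1:ℝ) : Ee n) := by
    have h := Finset.univ_sum_single y
    rw [← h]
    exact Finset.sum_congr rfl fun m _ => by
      ext j
      simp [Pi.single_apply]
  conv_lhs => rw [hy]
  rw [_root_.map_sum]
  unfold dotv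
  exact Finset.sum_congr rfl fun m _ => by rw [_root_.map_smul]; simp [mul_comm]

lemma exists_dual_vec {x : Ee n} (hx : x ∉ closure (Cone n)) :
    ∃ c : Ee n, (∀ y ∈ Cone n, dotv n c y ≤ 0) ∧ 0 < dotv n c x := by
  obtain ⟨f, u, hfu, hux⟩ := geometric_hahn_banach_closed_point
      ((cone_convex n).closure) isClosed_closure hx
  have h0 : (0 : Ee n) ∈ closure (Cone n) := subset_closure (zero_mem_cone n)
  have hu0 : 0 < u := by
    have := hfu 0 h0
    simpa using this
  have hyle : ∀ y ∈ Cone n, f y ≤ 0 := by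
    intro y hy
    by_contra h
    push_neg at h
    have ht : (0:ℝ) ≤ (u+1)/(f y) := by positivity
    have hmem := subset_closure (smul_mem_cone n ht hy)
    have hlt := hfu _ hmem
    rw [_root_.map_smul] at hlt
    rw [smul_eq_mul, div_mul_cancel₀ _ h.ne'] at hlt
    linarith
  refine ⟨fun m => f (Pi.single m 1), ?_, ?_⟩
  · intro y hy
    rw [← clm_eq_dotv]
    exact hyle y hy
  · rw [← clm_eq_dotv]
    linarith

def Dset : Set (Ee n) := {c | ‖c‖ = 1 ∧ ∀ y ∈ Cone n, dotv n c y ≤ 0}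

lemma dset_closed : IsClosed (Dset n) := by
  have h1 : IsClosed {c : Ee n | ‖c‖ = 1} := isClosed_eq continuous_norm continuous_const
  have h2 : IsClosed {c : Ee n | ∀ y ∈ Cone n, dotv n c y ≤ 0} := by
    have : {c : Ee n | ∀ y ∈ Cone n, dotv n c y ≤ 0}
        = ⋂ y ∈ Cone n, {c : Ee n | dotv n c y ≤ 0} := by
      ext c; simp
    rw [this]
    exact isClosed_biInter fun y hy => isClosed_le (dotv_cont n y) continuous_const
  exact h1.inter h2

lemma dset_compact : IsCompact (Dset n) := by
  have hsub : Dset n ⊆ Metric.sphere (0 : Ee n) 1 := by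
    intro c hc
    rw [mem_sphere_zero_iff_norm]
    exact hc.1
  exact (isCompact_sphere (0 : Ee n) 1).of_isClosed_subset (dset_closed n) hsub

lemma tau_pert_mem_closure (τ S : Ee n)
    (hstrict : ∀ c : Ee n, (∀ y ∈ Cone n, dotv n c y ≤ 0) → c ≠ 0 → dotv n c τ < 0) :
    ∃ δ : ℚ, 0 < δ ∧ τ - (δ:ℝ) • S ∈ closure (Cone n) := by
  have hnorm_ne : ∀ c : Ee n, ‖c‖ = 1 → c ≠ 0 := by
    intro c h hc
    rw [hc] at h; simp at h
  by_cases hD : (Dset n).Nonempty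
  · obtain ⟨c₀, hc₀D, hmax⟩ := (dset_compact n).exists_isMaxOn hD ((dotv_cont n τ).continuousOn)
    have hm₀ : dotv n c₀ τ < 0 := hstrict c₀ hc₀D.2 (hnorm_ne c₀ hc₀D.1)
    set B : ℝ := (∑ m, |S m|) + 1 with hB
    have hBpos : 0 < B := by positivity
    obtain ⟨δ, hδ1, hδ2⟩ := exists_rat_btwn (div_pos (show (0:ℝ) < -(dotv n c₀ τ) by linarith) hBpos)
    have hδ0 : 0 < δ := by exact_mod_cast hδ1
    have hδB : (δ:ℝ) * B < -(dotv n c₀ τ) := (lt_div_iff₀ hBpos).mp hδ2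
    refine ⟨δ, hδ0, ?_⟩
    by_contra hx
    obtain ⟨c, hc1, hc2⟩ := exists_dual_vec n hx
    have hcne : c ≠ 0 := by
      rintro rfl
      rw [dotv_zero_left] at hc2
      exact lt_irrefl _ hc2
    have hcpos : 0 < ‖c‖⁻¹ := inv_pos.mpr (norm_pos_iff.mpr hcne)
    set cN : Ee n := ‖c‖⁻¹ • c with hcN
    have hcND : cN ∈ Dset n := by
      constructor
      · rw [hcN, norm_smul, norm_inv, norm_norm]
        exact inv_mul_cancel₀ (norm_ne_zero_iff.mpr hcne)
      · intro y hy
        rw [hcN, dotv_smul_left]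
        exact mul_nonpos_of_nonneg_of_nonpos hcpos.le (hc1 y hy)
    have hbound : |dotv n cN S| ≤ B := by
      have h1 : ∀ m, |cN m| ≤ 1 := by
        intro m
        have h2 := norm_le_pi_norm cN m
        rw [hcND.1] at h2
        simpa using h2
      calc |dotv n cN S| ≤ ∑ m, |cN m * S m| := Finset.abs_sum_le_sum_abs _ _
        _ ≤ ∑ m, |S m| := Finset.sum_le_sum fun m _ => by
            rw [abs_mul]
            exact mul_le_of_le_one_left (abs_nonneg _) (h1 m)
        _ ≤ B := by rw [hB]; linarith
    have hup : dotv n cN (τ - (δ:ℝ) • S) ≤ dotv n c₀ τ + (δ:ℝ) * B := by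
      rw [dotv_sub, dotv_smul]
      have h1 : dotv n cN τ ≤ dotv n c₀ τ := hmax hcND
      have h2 := abs_le.mp hbound
      have hδnn : (0:ℝ) ≤ (δ:ℝ) := hδ1.le
      nlinarith [h2.1, h2.2]
    have hdn : 0 < dotv n cN (τ - (δ:ℝ) • S) := by
      rw [hcN, dotv_smul_left]
      exact mul_pos hcpos hc2
    linarith
  · refine ⟨1, one_pos, ?_⟩
    by_contra hx
    obtain ⟨c, hc1, hc2⟩ := exists_dual_vec n hx
    have hcne : c ≠ 0 := by
      rintro rfl
      rw [dotv_zero_left] at hc2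
      exact lt_irrefl _ hc2
    have hcpos : 0 < ‖c‖⁻¹ := inv_pos.mpr (norm_pos_iff.mpr hcne)
    refine hD ⟨‖c‖⁻¹ • c, ?_, ?_⟩
    · rw [norm_smul, norm_inv, norm_norm]
      exact inv_mul_cancel₀ (norm_ne_zero_iff.mpr hcne)
    · intro y hy
      rw [dotv_smul_left]
      exact mul_nonpos_of_nonneg_of_nonpos hcpos.le (hc1 y hy)

def tauq : Fin (n+1) → ℚ := fun m => Lam (m:ℕ)

lemma strict_tau (c : Ee n) (hcc : ∀ y ∈ Cone n, dotv n c y ≤ 0) (hcne : c ≠ 0) :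
    dotv n c (rv n (tauq n)) < 0 := by
  have hnn : ∀ t : ℝ, 0 ≤ t → 0 ≤ ∑ m : Fin (n+1), (- c m) * t ^ (m : ℕ) := by
    intro t ht
    by_contra hcon
    push_neg at hcon
    have hpos : 0 < ∑ m : Fin (n+1), c m * t ^ (m:ℕ) := by
      have hs : ∑ m : Fin (n+1), (- c m) * t ^ (m:ℕ)
          = - ∑ m : Fin (n+1), c m * t ^ (m:ℕ) := by
        rw [← Finset.sum_neg_distrib]
        exact Finset.sum_congr rfl fun m _ => by ring
      rw [hs] at hcon
      linarith
    set q2 : ℝ → ℝ := fun s => ∑ m : Fin (n+1), c m * (s^2) ^ (m:ℕ) with hq2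
    have hcont : Continuous q2 :=
      continuous_finset_sum _ fun m _ => continuous_const.mul ((continuous_pow 2).pow _)
    have hu : 0 < q2 (Real.sqrt t) := by
      rw [hq2]
      simp only
      rw [Real.sq_sqrt ht]
      exact hpos
    have hopen : IsOpen {s : ℝ | 0 < q2 s} := isOpen_lt continuous_const hcont
    obtain ⟨ε, hε, hball⟩ := Metric.isOpen_iff.mp hopen _ hu
    obtain ⟨σ, hσ1, hσ2⟩ := exists_rat_btwn (show Real.sqrt t - ε < Real.sqrt t by linarith)
    have hmem : (σ:ℝ) ∈ Metric.ball (Real.sqrt t) ε := by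
      rw [Metric.mem_ball, Real.dist_eq, abs_sub_lt_iff]
      constructor <;> linarith
    have hq2σ : 0 < q2 (σ:ℝ) := hball hmem
    have hgenmem : rv n (vqv n σ) ∈ Cone n := gen_mem_cone n (Or.inl ⟨σ, rfl⟩)
    have hle := hcc _ hgenmem
    have heq : dotv n c (rv n (vqv n σ)) = q2 (σ:ℝ) := by
      unfold dotv rv vqv
      rw [hq2]
      refine Finset.sum_congr rfl fun m _ => ?_
      push_cast
      rw [pow_mul]
    rw [heq] at hle
    linarith
  have hkey := poly_moment_pos (fun m => - c m) (by
      intro h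
      apply hcne
      funext m
      have := congrFun h m
      simpa using this) hnn
  have : ∑ m : Fin (n+1), (- c m) * (Lam (m:ℕ) : ℝ)
      = - dotv n c (rv n (tauq n)) := by
    unfold dotv rv tauq
    rw [← Finset.sum_neg_distrib]
    exact Finset.sum_congr rfl fun m _ => by ring
  rw [this] at hkey
  linarith

/-- nodes for the rational Vandermonde basis -/
def tq : Fin (n+1) → ℚ := fun i => ((i:ℕ) + 1 : ℚ)^2
def Mq : Matrix (Fin (n+1)) (Fin (n+1)) ℚ := Matrix.of fun m i => tq n i ^ (m:ℕ)
def Sq : Fin (n+1) → ℚ := fun m => ∑ i, tq n i ^ (m:ℕ)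

lemma Mq_det_ne : (Mq n).det ≠ 0 := by
  have htrans : Mq n = (Matrix.vandermonde (tq n)).transpose := by
    ext m i
    simp [Mq, Matrix.vandermonde, Matrix.transpose_apply]
  rw [htrans, Matrix.det_transpose, Matrix.det_vandermonde]
  apply Finset.prod_ne_zero_iff.mpr
  intro i _
  apply Finset.prod_ne_zero_iff.mpr
  intro j hj
  rw [Finset.mem_Ioi] at hj
  have : tq n i < tq n j := by
    unfold tq
    have h1 : ((i:ℕ) : ℚ) + 1 < ((j:ℕ) : ℚ) + 1 := by
      have : (i:ℕ) < (j:ℕ) := hj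
      exact_mod_cast Nat.succ_lt_succ this
    have h0 : (0:ℚ) ≤ ((i:ℕ) : ℚ) + 1 := by positivity
    exact pow_lt_pow_left₀ h1 h0 (by norm_num)
  exact sub_ne_zero.mpr this.ne'

lemma rv_mulVec (A : Matrix (Fin (n+1)) (Fin (n+1)) ℚ) (v : Fin (n+1) → ℚ) :
    rv n (A.mulVec v) = (A.map (fun q : ℚ => (q:ℝ))).mulVec (rv n v) := by
  funext m
  simp only [rv, Matrix.mulVec, dotProduct, Matrix.map_apply]
  push_cast
  rfl

theorem quad_exists : ∃ (M : ℕ) (lam sig : Fin M → ℚ) (d : ℚ),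
      (∀ i, 0 ≤ lam i) ∧ 0 ≤ d ∧
      (∀ m : ℕ, m < n → ∑ i, lam i * sig i ^ (2*m) = Lam m) ∧
      (∑ i, lam i * sig i ^ (2*n) = Lam n - d) := by
  classical
  -- setup
  set τ : Ee n := rv n (tauq n) with hτ
  set S : Ee n := rv n (Sq n) with hS
  obtain ⟨δ, hδ0, hmem⟩ := tau_pert_mem_closure n τ S (fun c h1 h2 => strict_tau n c h1 h2)
  set Nq : Matrix (Fin (n+1)) (Fin (n+1)) ℚ := (Mq n)⁻¹ with hNq
  have hunit : IsUnit (Mq n).det := isUnit_iff_ne_zero.mpr (Mq_det_ne n)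
  have hMN : Mq n * Nq = 1 := Matrix.mul_nonsing_inv _ hunit
  have hNM : Nq * Mq n = 1 := Matrix.nonsing_inv_mul _ hunit
  set Bq : ℚ := (∑ i, ∑ j, |Nq i j|) + 1 with hBq
  have hBq0 : (0:ℚ) < Bq := by
    rw [hBq]
    have : (0:ℚ) ≤ ∑ i, ∑ j, |Nq i j| :=
      Finset.sum_nonneg fun i _ => Finset.sum_nonneg fun j _ => abs_nonneg _
    linarith
  have hBr0 : (0:ℝ) < (Bq : ℝ) := by exact_mod_cast hBq0
  set εr : ℝ := (δ:ℝ)/(2*(Bq:ℝ)) with hεr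
  have hδr : (0:ℝ) < (δ:ℝ) := by exact_mod_cast hδ0
  have hεr0 : 0 < εr := by rw [hεr]; positivity
  obtain ⟨y', hy'C, hy'dist⟩ := Metric.mem_closure_iff.mp hmem εr hεr0
  obtain ⟨M₀, w, g, hw, hg, rfl⟩ := hy'C
  -- rational generators
  have hgq : ∀ j, ∃ gq : Fin (n+1) → ℚ,
      g j = rv n gq ∧ ((∃ σ:ℚ, gq = vqv n σ) ∨ gq = enq n) := by
    intro j
    rcases hg j with ⟨σ, hσ⟩ | he
    · exact ⟨vqv n σ, hσ.symm, Or.inl ⟨σ, rfl⟩⟩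
    · rw [Set.mem_singleton_iff] at he
      exact ⟨enq n, he, Or.inr rfl⟩
  choose gq hgq1 hgq2 using hgq
  -- rational weights
  set Gb : ℝ := (∑ j, ‖g j‖) + 1 with hGb
  have hGb0 : 0 < Gb := by
    rw [hGb]
    have : (0:ℝ) ≤ ∑ j, ‖g j‖ := Finset.sum_nonneg fun j _ => norm_nonneg _
    linarith
  set εw : ℝ := εr / Gb with hεw
  have hεw0 : 0 < εw := by rw [hεw]; positivity
  have hwt : ∀ j, ∃ q : ℚ, 0 ≤ q ∧ (q:ℝ) ≤ w j ∧ w j - (q:ℝ) ≤ εw := by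
    intro j
    obtain ⟨q, hq1, hq2⟩ := exists_rat_btwn (show w j - εw < w j by linarith)
    by_cases hq0 : 0 ≤ q
    · exact ⟨q, hq0, hq2.le, by linarith⟩
    · push_neg at hq0
      have hq0' : (q:ℝ) < 0 := by exact_mod_cast hq0
      exact ⟨0, le_refl 0, by simpa using hw j, by push_cast; linarith⟩
  choose wt hwt0 hwt1 hwt2 using hwt
  -- rational approximation vector
  set yq : Fin (n+1) → ℚ := fun m => ∑ j, wt j * gq j m with hyq
  have hcast : rv n yq = ∑ j, (wt j : ℝ) • g j := by
    funext m
    rw [hyq]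
    simp only [rv, Finset.sum_apply, Pi.smul_apply, smul_eq_mul]
    push_cast
    refine Finset.sum_congr rfl fun j _ => ?_
    rw [hgq1 j]
    rfl
  set ρq : Fin (n+1) → ℚ := fun m => tauq n m - yq m with hρq
  set ζq : Fin (n+1) → ℚ := fun m => ρq m - δ * Sq n m with hζq
  set cq : Fin (n+1) → ℚ := Nq.mulVec ρq with hcq
  -- norm bound on ζ
  have hζreal : rv n ζq = (τ - (δ:ℝ) • S) - rv n yq := by
    funext m
    simp only [hζq, hρq, rv, Pi.sub_apply, Pi.smul_apply, smul_eq_mul, hτ, hS]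
    push_cast
    ring
  have hynorm : ‖(∑ j, w j • g j) - rv n yq‖ ≤ εr := by
    rw [hcast, ← Finset.sum_sub_distrib]
    have h1 : ∀ j, w j • g j - (wt j : ℝ) • g j = (w j - (wt j:ℝ)) • g j := fun j => by
      rw [sub_smul]
    calc ‖∑ j, (w j • g j - (wt j : ℝ) • g j)‖
        ≤ ∑ j, ‖w j • g j - (wt j : ℝ) • g j‖ := norm_sum_le _ _
      _ ≤ ∑ j, εw * ‖g j‖ := by
          refine Finset.sum_le_sum fun j _ => ?_
          rw [h1 j, norm_smul]
          apply mul_le_mul_of_nonneg_right _ (norm_nonneg _)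
          rw [Real.norm_eq_abs, abs_of_nonneg (by linarith [hwt1 j])]
          exact hwt2 j
      _ = εw * ∑ j, ‖g j‖ := by rw [Finset.mul_sum]
      _ ≤ εw * Gb := by
          apply mul_le_mul_of_nonneg_left _ hεw0.le
          rw [hGb]; linarith
      _ = εr := by rw [hεw]; field_simp
  have hζnorm : ‖rv n ζq‖ < (δ:ℝ)/(Bq:ℝ) := by
    rw [hζreal]
    have htri : ‖(τ - (δ:ℝ) • S) - rv n yq‖
        ≤ ‖(τ - (δ:ℝ) • S) - (∑ j, w j • g j)‖ + ‖(∑ j, w j • g j) - rv n yq‖ := by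
      have := norm_sub_le_norm_sub_add_norm_sub (τ - (δ:ℝ) • S) (∑ j, w j • g j) (rv n yq)
      exact this
    have hd : ‖(τ - (δ:ℝ) • S) - (∑ j, w j • g j)‖ < εr := by
      rw [← dist_eq_norm]; exact hy'dist
    have : ‖(τ - (δ:ℝ) • S) - rv n yq‖ < 2*εr := by linarith [hynorm]
    calc ‖(τ - (δ:ℝ) • S) - rv n yq‖ < 2*εr := this
      _ = (δ:ℝ)/(Bq:ℝ) := by rw [hεr]; field_simp
  -- coordinates of cq are positive
  have hSq_mul : Sq n = (Mq n).mulVec (fun _ => 1) := by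
    funext m
    simp [Sq, Mq, Matrix.mulVec, dotProduct]
  have hNS : Nq.mulVec (Sq n) = fun _ => 1 := by
    rw [hSq_mul, Matrix.mulVec_mulVec, hNM, Matrix.one_mulVec]
  have hρsplit : ρq = fun m => ζq m + δ * Sq n m := by
    funext m
    rw [hζq]
    ring
  have hcq_eq : ∀ i, cq i = Nq.mulVec ζq i + δ := by
    intro i
    rw [hcq, hρsplit]
    have : (fun m => ζq m + δ * Sq n m) = ζq + δ • Sq n := by
      funext m; simp [Pi.add_apply, Pi.smul_apply, smul_eq_mul]
    rw [this, Matrix.mulVec_add, Matrix.mulVec_smul, hNS]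
    simp [Pi.add_apply, Pi.smul_apply, smul_eq_mul]
  have hrowbound : ∀ i, |((Nq.map (fun q : ℚ => (q:ℝ))).mulVec (rv n ζq)) i|
      ≤ ((∑ j, |Nq i j| : ℚ) : ℝ) * ‖rv n ζq‖ := by
    intro i
    simp only [Matrix.mulVec, dotProduct, Matrix.map_apply]
    calc |∑ j, ((Nq i j : ℚ):ℝ) * rv n ζq j| ≤ ∑ j, |((Nq i j : ℚ):ℝ) * rv n ζq j| :=
          Finset.abs_sum_le_sum_abs _ _
      _ ≤ ∑ j, |((Nq i j : ℚ):ℝ)| * ‖rv n ζq‖ := by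
          refine Finset.sum_le_sum fun j _ => ?_
          rw [abs_mul]
          apply mul_le_mul_of_nonneg_left _ (abs_nonneg _)
          have := norm_le_pi_norm (rv n ζq) j
          rwa [Real.norm_eq_abs] at this
      _ = ((∑ j, |Nq i j| : ℚ) : ℝ) * ‖rv n ζq‖ := by
          rw [← Finset.sum_mul]
          congr 1
          push_cast
          rfl
  have hcq_pos : ∀ i, 0 < cq i := by
    intro i
    have h1 : ((Nq.mulVec ζq i : ℚ) : ℝ) = ((Nq.map (fun q : ℚ => (q:ℝ))).mulVec (rv n ζq)) i := by
      have := congrFun (rv_mulVec n Nq ζq) i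
      exact this
    have h2 : |((Nq.mulVec ζq i : ℚ) : ℝ)| < (δ:ℝ) := by
      rw [h1]
      calc |((Nq.map (fun q : ℚ => (q:ℝ))).mulVec (rv n ζq)) i|
          ≤ ((∑ j, |Nq i j| : ℚ) : ℝ) * ‖rv n ζq‖ := hrowbound i
        _ ≤ ((Bq : ℝ) - 1) * ‖rv n ζq‖ := by
            apply mul_le_mul_of_nonneg_right _ (norm_nonneg _)
            have hrow : (∑ j, |Nq i j|) ≤ Bq - 1 := by
              rw [hBq]
              have : ∑ j, |Nq i j| ≤ ∑ i', ∑ j, |Nq i' j| := by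
                exact Finset.single_le_sum (f := fun i' => ∑ j, |Nq i' j|)
                  (fun i' _ => Finset.sum_nonneg fun j _ => abs_nonneg _) (Finset.mem_univ i)
              linarith
            have := hrow
            push_cast
            exact_mod_cast this
        _ < (δ:ℝ) := by
            rcases le_or_gt ‖rv n ζq‖ 0 with hz | hz
            · have hz' : ‖rv n ζq‖ = 0 := le_antisymm hz (norm_nonneg _)
              rw [hz', mul_zero]
              exact hδr
            · calc ((Bq : ℝ) - 1) * ‖rv n ζq‖ ≤ (Bq : ℝ) * ‖rv n ζq‖ := by nlinarith
                _ < (Bq : ℝ) * ((δ:ℝ)/(Bq:ℝ)) := by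
                    exact mul_lt_mul_of_pos_left hζnorm hBr0
                _ = (δ:ℝ) := by field_simp
    have h3 : -(δ:ℝ) < ((Nq.mulVec ζq i : ℚ) : ℝ) := by
      have := abs_lt.mp h2
      exact this.1
    have h4 : (0:ℝ) < ((Nq.mulVec ζq i : ℚ) : ℝ) + (δ:ℝ) := by linarith
    have h5 : ((cq i : ℚ) : ℝ) = ((Nq.mulVec ζq i : ℚ) : ℝ) + (δ:ℝ) := by
      rw [hcq_eq i]; push_cast; ring
    have : (0:ℝ) < ((cq i : ℚ) : ℝ) := by rw [h5]; exact h4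
    exact_mod_cast this
  -- main rational identity
  have hfinal : (Mq n).mulVec cq = ρq := by
    rw [hcq, Matrix.mulVec_mulVec, hMN, Matrix.one_mulVec]
  have hcoord : ∀ m : Fin (n+1),
      Lam (m:ℕ) = (∑ j, wt j * gq j m) + ∑ i, cq i * tq n i ^ (m:ℕ) := by
    intro m
    have h1 := congrFun hfinal m
    simp only [Matrix.mulVec, dotProduct, Mq, Matrix.of_apply] at h1
    have h2 : ρq m = tauq n m - yq m := rfl
    rw [h2] at h1
    have h3 : tauq n m = Lam (m:ℕ) := rfl
    rw [h3] at h1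
    have h4 : yq m = ∑ j, wt j * gq j m := rfl
    rw [h4] at h1
    have : ∑ i, tq n i ^ (m:ℕ) * cq i = ∑ i, cq i * tq n i ^ (m:ℕ) :=
      Finset.sum_congr rfl fun i _ => by ring
    linarith [h1, this]
  -- decompose each generator contribution
  have hjm : ∀ (j : Fin M₀) (m : Fin (n+1)),
      wt j * gq j m
        = (if h : ∃ σ:ℚ, gq j = vqv n σ then wt j else 0)
            * (if h : ∃ σ:ℚ, gq j = vqv n σ then h.choose else 0) ^ (2*(m:ℕ))
          + (if _h : ∃ σ:ℚ, gq j = vqv n σ then 0 else wt j)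
            * (if (m:ℕ) = n then 1 else 0) := by
    intro j m
    by_cases h : ∃ σ:ℚ, gq j = vqv n σ
    · simp only [dif_pos h]
      have hs := h.choose_spec
      conv_lhs => rw [hs]
      simp [vqv]
    · simp only [dif_neg h]
      have he : gq j = enq n := (hgq2 j).resolve_left h
      rw [he]
      simp [enq]
  set lamA : Fin M₀ → ℚ := fun j => if h : ∃ σ:ℚ, gq j = vqv n σ then wt j else 0 with hlamA
  set sA : Fin M₀ → ℚ := fun j => if h : ∃ σ:ℚ, gq j = vqv n σ then h.choose else 0 with hsA
  set dA : Fin M₀ → ℚ := fun j => if _h : ∃ σ:ℚ, gq j = vqv n σ then 0 else wt j with hdA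
  set dT : ℚ := ∑ j, dA j with hdT
  set lamF : Fin (M₀ + (n+1)) → ℚ := Fin.append lamA cq with hlamF
  set sigF : Fin (M₀ + (n+1)) → ℚ := Fin.append sA (fun i => ((i:ℕ) + 1 : ℚ)) with hsigF
  have hkey : ∀ m : Fin (n+1),
      ∑ i, lamF i * sigF i ^ (2*(m:ℕ)) = Lam (m:ℕ) - (if (m:ℕ) = n then dT else 0) := by
    intro m
    rw [hlamF, hsigF, Fin.sum_univ_add]
    have hA : ∀ j : Fin M₀,
        Fin.append lamA cq (Fin.castAdd (n+1) j)
          * Fin.append sA (fun i => ((i:ℕ) + 1 : ℚ)) (Fin.castAdd (n+1) j) ^ (2*(m:ℕ))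
        = lamA j * sA j ^ (2*(m:ℕ)) := fun j => by
      rw [Fin.append_left, Fin.append_left]
    have hB : ∀ i : Fin (n+1),
        Fin.append lamA cq (Fin.natAdd M₀ i)
          * Fin.append sA (fun i => ((i:ℕ) + 1 : ℚ)) (Fin.natAdd M₀ i) ^ (2*(m:ℕ))
        = cq i * tq n i ^ (m:ℕ) := fun i => by
      rw [Fin.append_right, Fin.append_right]
      unfold tq
      rw [← pow_mul]
    rw [Finset.sum_congr rfl fun j _ => hA j, Finset.sum_congr rfl fun i _ => hB i]
    have hsum1 : ∑ j, wt j * gq j m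
        = (∑ j, lamA j * sA j ^ (2*(m:ℕ))) + dT * (if (m:ℕ) = n then 1 else 0) := by
      rw [Finset.sum_congr rfl fun j _ => hjm j m, Finset.sum_add_distrib]
      congr 1
      rw [hdT, Finset.sum_mul]
    have hc := hcoord m
    rw [hsum1] at hc
    rcases eq_or_ne ((m:ℕ)) n with hmn | hmn
    · rw [if_pos hmn] at hc ⊢
      linarith
    · rw [if_neg hmn] at hc ⊢
      linarith
  refine ⟨M₀ + (n+1), lamF, sigF, dT, ?_, ?_, ?_, ?_⟩
  · intro i
    refine Fin.addCases (fun j => ?_) (fun j => ?_) i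
    · rw [hlamF, Fin.append_left]
      by_cases h : ∃ σ:ℚ, gq j = vqv n σ
      · simpa [hlamA, h] using hwt0 j
      · simp [hlamA, h]
    · rw [hlamF, Fin.append_right]
      exact (hcq_pos j).le
  · rw [hdT]
    refine Finset.sum_nonneg fun j _ => ?_
    by_cases h : ∃ σ:ℚ, gq j = vqv n σ
    · simp [hdA, h]
    · simpa [hdA, h] using hwt0 j
  · intro m hm
    have := hkey ⟨m, by omega⟩
    simp only at this
    rw [if_neg (by simpa using Nat.ne_of_lt hm)] at this
    rw [this]
    simp
  · have := hkey ⟨n, by omega⟩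
    simpa using this


end Cone

section Psection
variable {K : Type*} [Field K] [CharZero K]

/-- The additive submonoid of sums of 2k-th powers. -/
def P2k (K : Type*) [Field K] (k : ℕ) : AddSubmonoid K :=
  AddSubmonoid.closure (Set.range fun y : K => y ^ (2*k))

lemma pow_mem_P2k (k : ℕ) (y : K) : y ^ (2*k) ∈ P2k K k :=
  AddSubmonoid.subset_closure ⟨y, rfl⟩

lemma ratmul_mem_P2k {k : ℕ} (hk : 0 < k) (q : ℚ) (hq : 0 ≤ q) {a : K} (ha : a ∈ P2k K k) :
    (q : K) * a ∈ P2k K k := by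
  induction ha using AddSubmonoid.closure_induction with
  | mem y hy =>
      obtain ⟨z, rfl⟩ := hy
      -- (q:K) * z^(2k) = (q.num.toNat * q.den^(2k-1)) • ((z / q.den)^(2k))
      have hden : ((q.den : ℕ) : K) ≠ 0 := Nat.cast_ne_zero.mpr q.den_nz
      have hnum : ((q.num.toNat : ℕ) : K) = ((q.num : ℤ) : K) := by
        norm_cast
        exact Int.toNat_of_nonneg (Rat.num_nonneg.mpr hq)
      have key : (q : K) * z ^ (2*k)
          = (q.num.toNat * q.den ^ (2*k-1)) • ((z / (q.den : K)) ^ (2*k)) := by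
        rw [nsmul_eq_mul, div_pow]
        push_cast
        rw [hnum]
        rw [Rat.cast_def]
        have h2k : 2*k - 1 + 1 = 2*k := by omega
        field_simp
        have hsplit : ((q.den : K)) ^ (2*k) = ((q.den : K)) ^ (2*k-1) * (q.den : K) := by
          rw [← pow_succ, h2k]
        rw [hsplit]
        ring
      rw [key]
      exact AddSubmonoid.nsmul_mem _ (pow_mem_P2k k _) _
  | zero => simpa using (P2k K k).zero_mem
  | add x y _ _ hx hy => rw [mul_add]; exact (P2k K k).add_mem hx hy

lemma mem_P2k_iff {k : ℕ} {a : K} :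
    a ∈ P2k K k ↔ ∃ (n : ℕ) (c : Fin n → K), a = ∑ i, c i ^ (2*k) := by
  constructor
  · intro ha
    induction ha using AddSubmonoid.closure_induction with
    | mem y hy =>
        obtain ⟨z, rfl⟩ := hy
        exact ⟨1, fun _ => z, by simp⟩
    | zero => exact ⟨0, fun i => i.elim0, by simp⟩
    | add x y _ _ hx hy =>
        obtain ⟨n₁, c₁, rfl⟩ := hx
        obtain ⟨n₂, c₂, rfl⟩ := hy
        refine ⟨n₁ + n₂, Fin.append c₁ c₂, ?_⟩
        rw [Fin.sum_univ_add]
        congr 1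
        · exact Finset.sum_congr rfl fun i _ => by rw [Fin.append_left]
        · exact Finset.sum_congr rfl fun i _ => by rw [Fin.append_right]
  · rintro ⟨n, c, rfl⟩
    exact AddSubmonoid.sum_mem _ fun i _ => pow_mem_P2k k (c i)

lemma isSumSq_iff_fin {a : K} : IsSumSq a ↔ ∃ (r : ℕ) (x : Fin r → K), a = ∑ i, x i ^ 2 := by
  constructor
  · intro h
    induction h with
    | zero => exact ⟨0, fun i => i.elim0, by simp⟩
    | sq_add b _ ih =>
        obtain ⟨r, x, rfl⟩ := ih
        refine ⟨r + 1, Fin.cons b x, ?_⟩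
        rw [Fin.sum_univ_succ]
        simp [sq]
  · rintro ⟨r, x, rfl⟩
    induction r with
    | zero => simpa using IsSumSq.zero
    | succ r ih =>
        rw [Fin.sum_univ_succ]
        have := IsSumSq.sq_add (x 0) (ih (fun i => x i.succ))
        simpa [sq] using this

end Psection

section Ident
variable {K : Type*} [Field K] [CharZero K]

lemma Lam_id_K {i m : ℕ} (h : i ≤ m) :
    (((2*m).choose (2*i) : ℕ) : K) * (((Lam i : ℚ) : K) * ((Lam (m-i) : ℚ) : K))
      = ((m.choose i : ℕ) : K) * ((Lam m : ℚ) : K) := by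
  have h2 := congrArg (fun q : ℚ => (q : K)) (Lam_id h)
  push_cast at h2
  linear_combination h2

variable {L : ℕ}

abbrev Tix (L : ℕ) := Fin L × Bool

def wq (lam : Fin L → ℚ) (t : Tix L) : ℚ := lam t.1 / 2
def nuq (sig : Fin L → ℚ) (t : Tix L) : ℚ := Bool.rec (- sig t.1) (sig t.1) t.2
def muq (lam sig : Fin L → ℚ) (j : ℕ) : ℚ := ∑ t : Tix L, wq lam t * nuq sig t ^ j

variable (lam sig : Fin L → ℚ)

lemma muq_even (m : ℕ) : muq lam sig (2*m) = ∑ i, lam i * sig i ^ (2*m) := by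
  unfold muq wq nuq
  rw [Fintype.sum_prod_type]
  refine Finset.sum_congr rfl fun i _ => ?_
  rw [Fintype.sum_bool]
  have he : Even (2*m) := even_two_mul m
  show lam i / 2 * sig i ^ (2*m) + lam i / 2 * (- sig i) ^ (2*m) = _
  rw [he.neg_pow]
  ring

lemma muq_odd (j : ℕ) (hj : Odd j) : muq lam sig j = 0 := by
  unfold muq wq nuq
  rw [Fintype.sum_prod_type]
  apply Finset.sum_eq_zero
  intro i _
  rw [Fintype.sum_bool]
  show lam i / 2 * sig i ^ j + lam i / 2 * (- sig i) ^ j = 0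
  rw [hj.neg_pow]
  ring

lemma muq_cast (j : ℕ) :
    ((muq lam sig j : ℚ) : K) = ∑ t : Tix L, ((wq lam t : ℚ) : K) * ((nuq sig t : ℚ) : K) ^ j := by
  unfold muq
  push_cast
  rfl

/-- The fundamental multi-sum. -/
def Vv (r : ℕ) (x : Fin r → K) (e : ℕ) : K :=
  ∑ f : Fin r → Tix L,
    (∏ i, ((wq lam (f i) : ℚ) : K)) * (∑ i, ((nuq sig (f i) : ℚ) : K) * x i) ^ e

lemma Vv_zero (x : Fin 0 → K) (e : ℕ) : Vv lam sig 0 x e = (0 : K) ^ e := by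
  unfold Vv
  rw [Fintype.sum_eq_single (fun i : Fin 0 => i.elim0)]
  · simp
  · intro f hf; exact absurd (Subsingleton.elim f _) hf

lemma Vv_succ (r : ℕ) (x : Fin (r+1) → K) (e : ℕ) :
    Vv lam sig (r+1) x e
      = ∑ j ∈ range (e+1),
          ((e.choose j : ℕ) : K) * ((muq lam sig j : ℚ) : K) * (x 0) ^ j *
            Vv lam sig r (fun i => x i.succ) (e - j) := by
  conv_lhs => rw [Vv]
  rw [← Equiv.sum_comp (Fin.consEquiv fun _ : Fin (r+1) => Tix L), Fintype.sum_prod_type]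
  have key : ∀ (t : Tix L) (f' : Fin r → Tix L),
      (∏ i : Fin (r+1), ((wq lam ((Fin.consEquiv fun _ : Fin (r+1) => Tix L) (t, f') i) : ℚ) : K)) *
        (∑ i : Fin (r+1), ((nuq sig ((Fin.consEquiv fun _ : Fin (r+1) => Tix L) (t, f') i) : ℚ) : K) * x i) ^ e
      = ∑ j ∈ range (e+1),
          (((e.choose j : ℕ) : K) * ((nuq sig t : ℚ) : K) ^ j * (x 0) ^ j * ((wq lam t : ℚ) : K)) *
          ((∏ i : Fin r, ((wq lam (f' i) : ℚ) : K)) *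
           (∑ i : Fin r, ((nuq sig (f' i) : ℚ) : K) * x i.succ) ^ (e - j)) := by
    intro t f'
    simp only [Fin.consEquiv_apply]
    rw [Fin.prod_univ_succ, Fin.sum_univ_succ]
    simp only [Fin.cons_zero, Fin.cons_succ]
    rw [add_pow, Finset.mul_sum]
    refine Finset.sum_congr rfl fun j hj => ?_
    rw [mul_pow]
    ring
  simp only [key]
  have step1 : ∀ t : Tix L,
      (∑ f' : Fin r → Tix L, ∑ j ∈ range (e+1),
          ((((e.choose j : ℕ) : K) * ((nuq sig t : ℚ) : K) ^ j * (x 0) ^ j * ((wq lam t : ℚ) : K)) *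
          ((∏ i : Fin r, ((wq lam (f' i) : ℚ) : K)) *
           (∑ i : Fin r, ((nuq sig (f' i) : ℚ) : K) * x i.succ) ^ (e - j))))
        = ∑ j ∈ range (e+1),
            (((e.choose j : ℕ) : K) * ((nuq sig t : ℚ) : K) ^ j * (x 0) ^ j * ((wq lam t : ℚ) : K)) *
            Vv lam sig r (fun i => x i.succ) (e - j) := by
    intro t
    rw [Finset.sum_comm]
    exact Finset.sum_congr rfl fun j _ => by rw [← Finset.mul_sum]; rfl
  simp only [step1]
  rw [Finset.sum_comm]
  refine Finset.sum_congr rfl fun j hj => ?_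
  rw [muq_cast]
  symm
  rw [Finset.mul_sum, Finset.sum_mul, Finset.sum_mul]
  exact Finset.sum_congr rfl fun t _ => by ring

lemma Vv_odd (r : ℕ) (x : Fin r → K) (e : ℕ) (he : Odd e) : Vv lam sig r x e = 0 := by
  induction r generalizing e with
  | zero =>
      rw [Vv_zero, zero_pow]
      exact he.pos.ne'
  | succ r ih =>
      rw [Vv_succ]
      apply Finset.sum_eq_zero
      intro j hj
      rcases Nat.even_or_odd j with hje | hjo
      · have hjle : j ≤ e := by simp only [Finset.mem_range] at hj; omega
        have : Odd (e - j) := by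
          rcases he with ⟨a, ha⟩; rcases hje with ⟨b, hb⟩
          exact ⟨a - b, by omega⟩
        rw [ih _ _ this, mul_zero]
      · rw [muq_odd _ _ _ hjo]
        simp
  -- helper: vanishing on odds lets us reindex over even values
lemma sum_range_even {M : Type*} [AddCommMonoid M] (m : ℕ) (F : ℕ → M)
    (h : ∀ j, j < 2*m+1 → Odd j → F j = 0) :
    ∑ j ∈ range (2*m+1), F j = ∑ i ∈ range (m+1), F (2*i) := by
  rw [← Finset.sum_filter_add_sum_filter_not (range (2*m+1)) (fun j => Even j)]
  have h2 : ∑ j ∈ (range (2*m+1)).filter (fun j => ¬ Even j), F j = 0 :=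
    Finset.sum_eq_zero fun j hj => by
      simp only [Finset.mem_filter, Finset.mem_range] at hj
      exact h j hj.1 (Nat.not_even_iff_odd.mp hj.2)
  rw [h2, add_zero]
  have himg : (range (2*m+1)).filter (fun j => Even j) = (range (m+1)).image (fun i => 2*i) := by
    ext j
    simp only [Finset.mem_filter, Finset.mem_range, Finset.mem_image]
    constructor
    · rintro ⟨hj, i, hi⟩
      exact ⟨i, by omega, by omega⟩
    · rintro ⟨i, hi, rfl⟩
      exact ⟨by omega, ⟨i, by omega⟩⟩
  rw [himg, Finset.sum_image (by intros a _ b _ hab; simp only at hab; omega)]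

variable (k : ℕ) (d : ℚ)

theorem Vv_even (hk : 0 < k)
    (Hlow : ∀ m : ℕ, m < k → muq lam sig (2*m) = Lam m)
    (Htop : muq lam sig (2*k) = Lam k - d) :
    ∀ (r : ℕ) (x : Fin r → K) (m : ℕ), m ≤ k →
    Vv lam sig r x (2*m)
      = ((Lam m : ℚ) : K) * (∑ i, x i ^ 2) ^ m
        - (if m = k then ((d : ℚ) : K) * ∑ i, x i ^ (2*k) else 0) := by
  intro r
  induction r with
  | zero =>
      intro x m hm
      rw [Vv_zero]
      have hempty : (∑ i : Fin 0, x i ^ 2) = 0 := by simp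
      have hempty2 : (∑ i : Fin 0, x i ^ (2*k)) = 0 := by simp
      rw [hempty, hempty2, mul_zero]
      rcases Nat.eq_zero_or_pos m with rfl | hmpos
      · simp [Lam_zero]
      · rw [zero_pow (by omega), zero_pow (by omega)]
        simp
  | succ r ih =>
      intro x m hm
      rw [Vv_succ]
      rw [sum_range_even m _ (fun j hj hodd => by rw [muq_odd lam sig j hodd]; simp)]
      -- now ∑ i ∈ range (m+1), C(2m,2i) * mu(2i) * x0^(2i) * Vv r x' (2m - 2i)
      have hsub : ∀ i, i ∈ range (m+1) → 2*m - 2*i = 2*(m-i) := fun i hi => by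
        simp only [Finset.mem_range] at hi; omega
      set x' : Fin r → K := fun i => x i.succ with hx'
      set T' : K := ∑ i, x' i ^ 2 with hT'
      set S' : K := ∑ i, x' i ^ (2*k) with hS'
      have hsplit : (∑ i, x i ^ 2) = x 0 ^ 2 + T' := by
        rw [Fin.sum_univ_succ]
      have hsplit2 : (∑ i, x i ^ (2*k)) = x 0 ^ (2*k) + S' := by
        rw [Fin.sum_univ_succ]
      rcases Nat.lt_or_ge m k with hmk | hmk
      · -- m < k : clean case
        have hstep : ∀ i ∈ range (m+1),
            (((2*m).choose (2*i) : ℕ) : K) * ((muq lam sig (2*i) : ℚ) : K) * (x 0) ^ (2*i) *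
              Vv lam sig r x' (2*m - 2*i)
            = ((Lam m : ℚ) : K) * (((m.choose i : ℕ) : K) * (x 0 ^ 2) ^ i * T' ^ (m - i)) := by
          intro i hi
          have him : i ≤ m := by simp only [Finset.mem_range] at hi; omega
          rw [hsub i hi, Hlow i (by omega), ih x' (m - i) (by omega)]
          rw [if_neg (by omega)]
          rw [sub_zero, ← pow_mul]
          have := Lam_id_K (K := K) him
          calc (((2*m).choose (2*i) : ℕ) : K) * ((Lam i : ℚ) : K) * (x 0) ^ (2*i) *
                (((Lam (m-i) : ℚ) : K) * T' ^ (m - i))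
              = ((((2*m).choose (2*i) : ℕ) : K) * (((Lam i : ℚ) : K) * ((Lam (m-i) : ℚ) : K))) *
                ((x 0) ^ (2*i) * T' ^ (m - i)) := by ring
            _ = (((m.choose i : ℕ) : K) * ((Lam m : ℚ) : K)) * ((x 0) ^ (2*i) * T' ^ (m - i)) := by
                rw [this]
            _ = ((Lam m : ℚ) : K) * (((m.choose i : ℕ) : K) * (x 0 ^ (2*i)) * T' ^ (m - i)) := by
                ring
            _ = _ := by ring
        rw [Finset.sum_congr rfl hstep, ← Finset.mul_sum]
        rw [if_neg (by omega)]
        rw [sub_zero, hsplit]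
        congr 1
        rw [add_pow]
        exact Finset.sum_congr rfl fun i hi => by ring
      · -- m = k
        have hmk' : m = k := le_antisymm hm hmk
        have hstep : ∀ i ∈ range (m+1),
            (((2*m).choose (2*i) : ℕ) : K) * ((muq lam sig (2*i) : ℚ) : K) * (x 0) ^ (2*i) *
              Vv lam sig r x' (2*m - 2*i)
            = ((Lam m : ℚ) : K) * (((m.choose i : ℕ) : K) * (x 0 ^ 2) ^ i * T' ^ (m - i))
              - ((if i = 0 then ((d : ℚ) : K) * S' else 0)
                 + (if i = m then ((d : ℚ) : K) * (x 0) ^ (2*m) else 0)) := by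
          intro i hi
          have him : i ≤ m := by simp only [Finset.mem_range] at hi; omega
          rw [hsub i hi]
          rcases Nat.eq_zero_or_pos i with rfl | hipos
          · -- i = 0
            rw [if_pos rfl, if_neg (by omega)]
            rw [Hlow 0 (by omega), ih x' (m - 0) (by omega), if_pos (by omega)]
            simp only [Nat.sub_zero, Nat.mul_zero, Nat.choose_zero_right, pow_zero, Lam_zero]
            push_cast
            ring
          · rcases Nat.lt_or_ge i m with him' | him'
            · -- 0 < i < m
              rw [if_neg (by omega), if_neg (by omega)]
              rw [Hlow i (by omega), ih x' (m - i) (by omega), if_neg (by omega)]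
              rw [sub_zero, add_zero]
              have hL := Lam_id_K (K := K) him
              calc (((2*m).choose (2*i) : ℕ) : K) * ((Lam i : ℚ) : K) * (x 0) ^ (2*i) *
                    (((Lam (m-i) : ℚ) : K) * T' ^ (m - i))
                  = ((((2*m).choose (2*i) : ℕ) : K) * (((Lam i : ℚ) : K) * ((Lam (m-i) : ℚ) : K))) *
                    ((x 0) ^ (2*i) * T' ^ (m - i)) := by ring
                _ = (((m.choose i : ℕ) : K) * ((Lam m : ℚ) : K)) * ((x 0) ^ (2*i) * T' ^ (m - i)) := by
                    rw [hL]
                _ = _ := by ring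
            · -- i = m
              have hieq : i = m := by omega
              subst hieq
              rw [if_neg (by omega), if_pos rfl]
              rw [show 2*i = 2*k from by omega, Htop]
              rw [show i - i = 0 from by omega, ih x' 0 (by omega), if_neg (by omega)]
              simp only [Nat.choose_self, Lam_zero, pow_zero, Nat.mul_zero, Nat.sub_self]
              rw [hmk']
              push_cast
              ring
        rw [Finset.sum_congr rfl hstep]
        rw [Finset.sum_sub_distrib, Finset.sum_add_distrib]
        rw [Finset.sum_ite_eq' (range (m+1)) 0 (fun _ => ((d : ℚ) : K) * S')]
        rw [Finset.sum_ite_eq' (range (m+1)) m (fun _ => ((d : ℚ) : K) * (x 0) ^ (2*m))]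
        rw [if_pos (by simp), if_pos (by simp)]
        rw [← Finset.mul_sum, if_pos hmk']
        rw [hsplit, hsplit2]
        have hbin : (∑ i ∈ range (m+1), (((m.choose i : ℕ) : K) * (x 0 ^ 2) ^ i * T' ^ (m - i)))
            = (x 0 ^ 2 + T') ^ m := by
          rw [add_pow]
          exact Finset.sum_congr rfl fun i hi => by ring
        rw [hbin]
        rw [show (2:ℕ)*k = 2*m from by omega]
        ring
/-- Main Hilbert-identity consequence: the k-th power of a sum of squares is
a sum of (2k)-th powers. -/
theorem sq_sum_pow_mem {k : ℕ} (hk : 0 < k) (r : ℕ) (x : Fin r → K) :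
    (∑ i, x i ^ 2) ^ k ∈ P2k K k := by
  obtain ⟨M, lam, sig, d, hlam, hd, Hlow, Htop⟩ := quad_exists k
  have Hlow' : ∀ m : ℕ, m < k → muq lam sig (2*m) = Lam m := fun m hm => by
    rw [muq_even]; exact Hlow m hm
  have Htop' : muq lam sig (2*k) = Lam k - d := by
    rw [muq_even]; exact Htop
  have hiden := Vv_even lam sig k d hk Hlow' Htop' r x k (le_refl k)
  rw [if_pos rfl] at hiden
  -- (Lam k) * T^k = Vv + d * Σ
  have key : ((Lam k : ℚ) : K) * (∑ i, x i ^ 2) ^ k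
      = Vv lam sig r x (2*k) + ((d : ℚ) : K) * ∑ i, x i ^ (2*k) := by
    rw [hiden]; ring
  have hV : Vv lam sig r x (2*k) ∈ P2k K k := by
    apply AddSubmonoid.sum_mem
    intro f _
    have hprod : (∏ i, ((wq lam (f i) : ℚ) : K)) = (((∏ i, wq lam (f i) : ℚ)) : K) := by
      push_cast; rfl
    rw [hprod]
    apply ratmul_mem_P2k hk
    · apply Finset.prod_nonneg
      intro i _
      unfold wq
      have := hlam (f i).1
      positivity
    · exact pow_mem_P2k k _
  have hD : ((d : ℚ) : K) * (∑ i, x i ^ (2*k)) ∈ P2k K k := by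
    apply ratmul_mem_P2k hk _ hd
    exact AddSubmonoid.sum_mem _ fun i _ => pow_mem_P2k k (x i)
  have hmem : ((Lam k : ℚ) : K) * (∑ i, x i ^ 2) ^ k ∈ P2k K k := by
    rw [key]; exact (P2k K k).add_mem hV hD
  have hfin := ratmul_mem_P2k hk (Lam k)⁻¹ (le_of_lt (inv_pos.mpr (Lam_pos k))) hmem
  have hrw : (∑ i, x i ^ 2) ^ k
      = (((Lam k)⁻¹ : ℚ) : K) * (((Lam k : ℚ) : K) * (∑ i, x i ^ 2) ^ k) := by
    rw [← mul_assoc, Rat.cast_inv, inv_mul_cancel₀ (Rat.cast_ne_zero.mpr (Lam_pos k).ne'), one_mul]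
  rw [hrw]
  exact hfin

end Ident
end TP

theorem totally_positive_kth_powers_eq_2kth_powers (K : Type*) [Field K] [CharZero K]
    (k : ℕ) (hk : 0 < k) (a : K) :
    (∃ (n : ℕ) (c : Fin n → K), (∀ i, IsSumSq (c i)) ∧ a = ∑ i, c i ^ k) ↔
    (∃ (n : ℕ) (c : Fin n → K), a = ∑ i, c i ^ (2 * k)) := by
  constructor
  · rintro ⟨n, c, hsq, rfl⟩
    rw [← TP.mem_P2k_iff]
    apply AddSubmonoid.sum_mem
    intro i _
    obtain ⟨r, x, hx⟩ := TP.isSumSq_iff_fin.mp (hsq i)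
    rw [hx]
    exact TP.sq_sum_pow_mem hk r x
  · rintro ⟨n, c, rfl⟩
    refine ⟨n, fun i => c i ^ 2, fun i => ?_, ?_⟩
    · simpa [pow_two] using IsSumSq.sq_add (c i) 0 IsSumSq.zero
    · exact Finset.sum_congr rfl fun i _ => by rw [← pow_mul]
end

section
/- Every element of a field F of characteristic 0 is a sum of at most 3 cubes of elements of F, provided F is infinite enough to choose s with the required nonvanishing; precisely, for r, s ∈ F with s ≠ 0 and t = 3r/s^3 satisfying 1 - t + t^2 ≠ 0, one has r = (s(1+t^3)/(3(1-t+t^2)))^3 + (s(3t-1-t^3)/(3(1-t+t^2)))^3 + ((s(3t-3t^2))/(3(1-t+t^2)))^3. -/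
theorem richmond_three_cubes (F : Type*) [Field F] (h3 : (3 : F) ≠ 0)
    (r s : F) (hs : s ≠ 0) (ht : 1 - 3 * r / s ^ 3 + (3 * r / s ^ 3) ^ 2 ≠ 0) :
    letI t := 3 * r / s ^ 3
    r = (s * (1 + t ^ 3) / (3 * (1 - t + t ^ 2))) ^ 3 +
        (s * (3 * t - 1 - t ^ 3) / (3 * (1 - t + t ^ 2))) ^ 3 +
        (s * (3 * t - 3 * t ^ 2) / (3 * (1 - t + t ^ 2))) ^ 3 := by
  have hs3 : s ^ 3 ≠ 0 := pow_ne_zero _ hs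
  set t := 3 * r / s ^ 3 with htdef
  have hr : r = t * s ^ 3 / 3 := by
    rw [htdef]; field_simp
  rw [hr]
  field_simp
  ring
end

section
/- Let K = Q(θ) be an algebraic number field with real embeddings σ_1, ..., σ_r. For any real numbers η_1, ..., η_r and any ε > 0, there exists β ∈ K such that |σ_i(β) - η_i| < ε for all 1 ≤ i ≤ r. -/
theorem real_embeddings_simultaneous_approx (K : Type*) [Field K] [NumberField K]
    (r : ℕ) (σ : Fin r → (K →+* ℝ)) (hσ : Function.Injective σ)
    (η : Fin r → ℝ) (ε : ℝ) (hε : 0 < ε) :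
    ∃ β : K, ∀ i, |σ i β - η i| < ε := by
  classical
  set Φ : K → (Fin r → ℝ) := fun β i => σ i β with hΦdef
  -- Step 1: the real span of the image of K is everything
  have hspan : Submodule.span ℝ (Set.range Φ) = ⊤ := by
    by_contra h
    have hlt : Submodule.span ℝ (Set.range Φ) < ⊤ := lt_top_iff_ne_top.2 h
    obtain ⟨f, hf0, hfbot⟩ :=
      (Submodule.span ℝ (Set.range Φ)).exists_dual_map_eq_bot_of_lt_top hlt inferInstance
    have hfvanish : ∀ β : K, f (Φ β) = 0 := by
      intro β
      have : Φ β ∈ Submodule.span ℝ (Set.range Φ) :=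
        Submodule.subset_span ⟨β, rfl⟩
      have : f (Φ β) ∈ (Submodule.span ℝ (Set.range Φ)).map f :=
        Submodule.mem_map_of_mem this
      rw [hfbot] at this
      simpa using this
    -- coordinates of f
    set c : Fin r → ℝ := fun i => f (fun j => if i = j then 1 else 0) with hc
    have hfc : ∀ x : Fin r → ℝ, f x = ∑ i, x i * c i := by
      intro x
      simpa [smul_eq_mul] using LinearMap.pi_apply_eq_sum_univ f x
    -- Dedekind's theorem on linear independence of characters
    have li : LinearIndependent ℝ (fun i : Fin r => ⇑(σ i : K →* ℝ)) := by
      refine (linearIndependent_monoidHom K ℝ).comp (fun i => (σ i : K →* ℝ)) ?_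
      intro i j hij
      exact hσ (RingHom.coe_monoidHom_injective hij)
    have hc0 : ∀ i, c i = 0 := by
      have := Fintype.linearIndependent_iff.mp li c ?_
      · exact this
      · funext β
        have := hfvanish β
        rw [hfc] at this
        simpa [Finset.sum_apply, mul_comm, Φ] using this
    exact hf0 (DFunLike.ext _ _ fun x => by rw [hfc]; simp [hc0])
  -- Step 2: write η as a real combination of elements of the image
  have hη : η ∈ Submodule.span ℝ (Set.range Φ) := hspan ▸ Submodule.mem_top
  obtain ⟨co, hsupp, hsum⟩ := Submodule.mem_span_set.mp hη
  set T := co.support with hT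
  -- preimages
  have hpre : ∀ v ∈ T, ∃ x : K, Φ x = v := fun v hv => hsupp hv
  choose b hb using hpre
  -- bound on the vectors
  set S : ℝ := ∑ v ∈ T.attach, ∑ j, |(v : Fin r → ℝ) j| with hS
  have hS0 : 0 ≤ S := Finset.sum_nonneg fun v _ => Finset.sum_nonneg fun j _ => abs_nonneg _
  set δ : ℝ := ε / (S + 1) with hδ
  have hδ0 : 0 < δ := div_pos hε (by linarith)
  -- rational approximations of the coefficients
  have hq : ∀ v : T, ∃ q : ℚ, |co v - q| < δ := fun v => exists_rat_near _ hδ0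
  choose q hqlt using hq
  refine ⟨∑ v ∈ T.attach, (q v : K) * b v v.2, fun j => ?_⟩
  have hσβ : σ j (∑ v ∈ T.attach, (q v : K) * b v v.2)
      = ∑ v ∈ T.attach, (q v : ℝ) * (v : Fin r → ℝ) j := by
    rw [map_sum]
    refine Finset.sum_congr rfl fun v _ => ?_
    rw [map_mul, map_ratCast]
    exact congrArg (fun t => (q v : ℝ) * t) (congrFun (hb v v.2) j)
  have hηj : η j = ∑ v ∈ T.attach, co v * (v : Fin r → ℝ) j := by
    have : (co.sum fun mi r => r • mi) j = η j := by rw [hsum]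
    rw [← this, Finsupp.sum]
    rw [← Finset.sum_attach T (fun v => co v • v)]
    simp [Finset.sum_apply]
  rw [hσβ, hηj, ← Finset.sum_sub_distrib]
  have hbound : |∑ v ∈ T.attach, ((q v : ℝ) * (v : Fin r → ℝ) j - co v * (v : Fin r → ℝ) j)|
      ≤ ∑ v ∈ T.attach, δ * |(v : Fin r → ℝ) j| := by
    refine (Finset.abs_sum_le_sum_abs _ _).trans (Finset.sum_le_sum fun v _ => ?_)
    rw [← sub_mul, abs_mul]
    have h1 : |(q v : ℝ) - co v| ≤ δ := by
      rw [abs_sub_comm]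
      exact le_of_lt (hqlt v)
    exact mul_le_mul_of_nonneg_right h1 (abs_nonneg _)
  refine lt_of_le_of_lt hbound ?_
  rw [← Finset.mul_sum]
  have h2 : ∑ v ∈ T.attach, |(v : Fin r → ℝ) j| ≤ S := by
    refine Finset.sum_le_sum fun v _ => ?_
    exact Finset.single_le_sum (f := fun k => |(v : Fin r → ℝ) k|)
      (fun k _ => abs_nonneg _) (Finset.mem_univ j)
  calc δ * ∑ v ∈ T.attach, |(v : Fin r → ℝ) j| ≤ δ * S :=
        mul_le_mul_of_nonneg_left h2 hδ0.le
    _ < δ * (S + 1) := by nlinarith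
    _ = ε := by rw [hδ]; exact div_mul_cancel₀ ε (ne_of_gt (by linarith))
end

section
/- Let f(X) ∈ R[X] be a polynomial with f(x) ≥ 0 for all real x. If f is a sum of fourth powers of rational functions in R(X), then the degree of f is divisible by 4, and moreover any real root γ of f satisfies: (X - γ)^4 divides f(X). -/
open Polynomial

/-- degree lemma -/
lemma sum_pow4_natDegree {r : ℕ} (p : Fin r → ℝ[X]) (h : ∃ j, p j ≠ 0) :
    (∑ i, p i ^ 4) ≠ 0 ∧
      (∑ i, p i ^ 4).natDegree = 4 * Finset.univ.sup (fun i => (p i).natDegree) := by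
  obtain ⟨j, hj⟩ := h
  set N := Finset.univ.sup (fun i => (p i).natDegree) with hN
  have hcoeff : (∑ i, p i ^ 4).coeff (4 * N) = ∑ i, (p i).coeff N ^ 4 := by
    rw [finset_sum_coeff]
    refine Finset.sum_congr rfl fun i _ => ?_
    exact coeff_pow_of_natDegree_le (Finset.le_sup (f := fun i => (p i).natDegree) (Finset.mem_univ i))
  -- find a nonzero p with max degree
  obtain ⟨i0, -, hi0⟩ := Finset.exists_mem_eq_sup Finset.univ
    ⟨j, Finset.mem_univ j⟩ (fun i => (p i).natDegree)
  have hex : ∃ k, p k ≠ 0 ∧ (p k).natDegree = N := by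
    by_cases h0 : p i0 = 0
    · have hN0 : N = 0 := by rw [hN, hi0, h0, natDegree_zero]
      have hle : (p j).natDegree ≤ N := Finset.le_sup (f := fun i => (p i).natDegree) (Finset.mem_univ j)
      exact ⟨j, hj, by omega⟩
    · exact ⟨i0, h0, hi0.symm⟩
  obtain ⟨k, hk0, hkN⟩ := hex
  have hpos : 0 < ∑ i, (p i).coeff N ^ 4 := by
    apply Finset.sum_pos' (fun i _ => by positivity)
    refine ⟨k, Finset.mem_univ k, ?_⟩
    have : (p k).coeff N ≠ 0 := by
      rw [← hkN]; exact leadingCoeff_ne_zero.mpr hk0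
    positivity
  have hne : (∑ i, p i ^ 4).coeff (4 * N) ≠ 0 := by rw [hcoeff]; exact ne_of_gt hpos
  have hg0 : (∑ i, p i ^ 4) ≠ 0 := fun h => hne (by rw [h, coeff_zero])
  refine ⟨hg0, le_antisymm ?_ (le_natDegree_of_ne_zero hne)⟩
  refine (natDegree_sum_le _ _).trans ?_
  rw [Finset.fold_max_le]
  refine ⟨Nat.zero_le _, fun i _ => ?_⟩
  calc (p i ^ 4).natDegree ≤ 4 * (p i).natDegree := natDegree_pow_le
    _ ≤ 4 * N := by
        exact Nat.mul_le_mul_left 4 (Finset.le_sup (f := fun i => (p i).natDegree) (Finset.mem_univ i))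

/-- multiplicity lemma -/
lemma sum_pow4_rootMultiplicity (γ : ℝ) :
    ∀ n : ℕ, ∀ (r : ℕ) (p : Fin r → ℝ[X]), (∑ i, p i ^ 4) ≠ 0 →
      (∑ i, p i ^ 4).natDegree ≤ n → 4 ∣ rootMultiplicity γ (∑ i, p i ^ 4) := by
  intro n
  induction n using Nat.strong_induction_on with
  | _ n IH =>
    intro r p hg hdeg
    by_cases hev : (∑ i, p i ^ 4).eval γ = 0
    · -- every p i has γ as a root
      have hroot : ∀ i, (p i).eval γ = 0 := by
        intro i
        have h1 : ∑ i : Fin r, (p i).eval γ ^ 4 = 0 := by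
          simpa [eval_finset_sum] using hev
        have h2 := (Finset.sum_eq_zero_iff_of_nonneg
          (fun i _ => by positivity)).mp h1 i (Finset.mem_univ i)
        exact pow_eq_zero_iff (by norm_num) |>.mp h2
      choose q hq using fun i => (dvd_iff_isRoot.mpr (hroot i))
      have hgfact : (∑ i, p i ^ 4) = (X - C γ) ^ 4 * ∑ i, q i ^ 4 := by
        rw [Finset.mul_sum]
        refine Finset.sum_congr rfl fun i _ => ?_
        rw [hq i, mul_pow]
      have hq0 : (∑ i, q i ^ 4) ≠ 0 := by
        intro h; apply hg; rw [hgfact, h, mul_zero]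
      have hXg : (X - C γ : ℝ[X]) ≠ 0 := X_sub_C_ne_zero γ
      have hmul : rootMultiplicity γ (∑ i, p i ^ 4)
          = 4 + rootMultiplicity γ (∑ i, q i ^ 4) := by
        rw [hgfact, rootMultiplicity_mul (by rw [← hgfact]; exact hg),
          rootMultiplicity_X_sub_C_pow]
      have hdeg' : ((X - C γ) ^ 4 * ∑ i, q i ^ 4).natDegree
          = 4 + (∑ i, q i ^ 4).natDegree := by
        rw [natDegree_mul (pow_ne_zero _ hXg) hq0, natDegree_pow, natDegree_X_sub_C, mul_one]
      have hlt : (∑ i, q i ^ 4).natDegree < n := by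
        have := hdeg; rw [hgfact, hdeg'] at this; omega
      rw [hmul]
      exact Nat.dvd_add ⟨1, rfl⟩ (IH _ hlt r q hq0 le_rfl)
    · rw [rootMultiplicity_eq_zero hev]
      exact dvd_zero 4

theorem fourth_powers_degree_and_roots (f : ℝ[X])
    (hpos : ∀ x : ℝ, 0 ≤ f.eval x)
    (hsum : ∃ (r : ℕ) (a : Fin r → RatFunc ℝ),
      algebraMap ℝ[X] (RatFunc ℝ) f = ∑ i, a i ^ 4) :
    4 ∣ f.natDegree ∧ ∀ γ : ℝ, f.eval γ = 0 → (X - C γ) ^ 4 ∣ f := by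
  by_cases hf0 : f = 0
  · subst hf0; exact ⟨⟨0, rfl⟩, fun γ _ => dvd_zero _⟩
  obtain ⟨r, a, ha⟩ := hsum
  -- common denominator
  set d : ℝ[X] := ∏ i, (a i).denom with hd
  have hd0 : d ≠ 0 := Finset.prod_ne_zero_iff.mpr fun i _ => RatFunc.denom_ne_zero _
  set p : Fin r → ℝ[X] := fun i => (a i).num * ∏ j ∈ Finset.univ.erase i, (a j).denom with hp
  have key : ∀ i, algebraMap ℝ[X] (RatFunc ℝ) (p i) = a i * algebraMap ℝ[X] (RatFunc ℝ) d := by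
    intro i
    have hnum : algebraMap ℝ[X] (RatFunc ℝ) (a i).num
        = a i * algebraMap ℝ[X] (RatFunc ℝ) (a i).denom := by
      have hne : (algebraMap ℝ[X] (RatFunc ℝ)) (a i).denom ≠ 0 :=
        RatFunc.algebraMap_ne_zero (RatFunc.denom_ne_zero _)
      have h := RatFunc.num_div_denom (a i)
      rw [div_eq_iff hne] at h
      exact h
    have hdsplit : d = (a i).denom * ∏ j ∈ Finset.univ.erase i, (a j).denom := by
      rw [hd, ← Finset.mul_prod_erase Finset.univ _ (Finset.mem_univ i)]
    rw [hp, map_mul, hnum, hdsplit, map_mul]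
    ring
  have hgf : f * d ^ 4 = ∑ i, p i ^ 4 := by
    apply RatFunc.algebraMap_injective
    rw [map_mul, map_pow, ha, map_sum, Finset.sum_mul]
    refine Finset.sum_congr rfl fun i _ => ?_
    rw [map_pow, key i, mul_pow]
  have hg0 : (∑ i, p i ^ 4) ≠ 0 := by
    rw [← hgf]; exact mul_ne_zero hf0 (pow_ne_zero _ hd0)
  have hex : ∃ j, p j ≠ 0 := by
    by_contra h
    push_neg at h
    exact hg0 (Finset.sum_eq_zero fun i _ => by rw [h i, zero_pow (by norm_num)])
  obtain ⟨-, hdeg⟩ := sum_pow4_natDegree p hex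
  constructor
  · have : f.natDegree + 4 * d.natDegree = 4 * Finset.univ.sup fun i => (p i).natDegree := by
      rw [← hdeg, ← hgf, natDegree_mul hf0 (pow_ne_zero _ hd0), natDegree_pow]
    omega
  · intro γ hγ
    have hmg : 4 ∣ rootMultiplicity γ (∑ i, p i ^ 4) :=
      sum_pow4_rootMultiplicity γ _ r p hg0 le_rfl
    have hsplit : rootMultiplicity γ (f * d ^ 4)
        = rootMultiplicity γ f + 4 * rootMultiplicity γ d := by
      have e4 : d ^ 4 = d * (d * (d * d)) := by ring
      rw [rootMultiplicity_mul (mul_ne_zero hf0 (pow_ne_zero _ hd0)), e4,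
        rootMultiplicity_mul (mul_ne_zero hd0 (mul_ne_zero hd0 (mul_ne_zero hd0 hd0))),
        rootMultiplicity_mul (mul_ne_zero hd0 (mul_ne_zero hd0 hd0)),
        rootMultiplicity_mul (mul_ne_zero hd0 hd0)]
      ring
    have h4 : 4 ∣ rootMultiplicity γ f := by
      rw [hgf] at hsplit; omega
    have hpos' : 0 < rootMultiplicity γ f := (rootMultiplicity_pos hf0).mpr hγ
    have h4le : 4 ≤ rootMultiplicity γ f := by omega
    calc (X - C γ) ^ 4 ∣ (X - C γ) ^ rootMultiplicity γ f := pow_dvd_pow _ h4le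
      _ ∣ f := pow_rootMultiplicity_dvd f γ
end

section
/- Suppose f ∈ R[X] is a sum of fourth powers in R(X): f = a_1^4 + ... + a_r^4 with a_i ∈ R(X), and f = b_1^2 + ... + b_n^2 with b_i ∈ R[X]. If γ is a real root of f and p is the minimal polynomial of γ over Q (assuming γ algebraic and f ∈ Q[X]), then p^2 divides each b_i and p^4 divides f. -/
open Polynomial

private lemma base_dvd (γ : ℝ) {m : ℕ} (c : Fin m → ℚ[X]) {k : ℕ} (hk : Even k) (hk0 : k ≠ 0)
    (h : minpoly ℚ γ ∣ ∑ i, c i ^ k) : ∀ i, minpoly ℚ γ ∣ c i := by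
  intro i
  apply minpoly.dvd
  obtain ⟨g, hg⟩ := h
  have h0 : (aeval γ) (∑ j, c j ^ k) = 0 := by
    rw [hg, map_mul, minpoly.aeval, zero_mul]
  rw [map_sum] at h0
  simp only [map_pow] at h0
  have hnn : ∀ j ∈ Finset.univ, (0:ℝ) ≤ (aeval γ (c j)) ^ k := fun j _ => hk.pow_nonneg _
  have h1 := (Finset.sum_eq_zero_iff_of_nonneg hnn).mp h0 i (Finset.mem_univ i)
  exact pow_eq_zero_iff hk0 |>.mp h1

private lemma pow_dvd_of_dvd_sum (p : ℚ[X]) (hp0 : p ≠ 0) (k : ℕ)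
    (base : ∀ {m : ℕ} (c : Fin m → ℚ[X]), p ∣ ∑ i, c i ^ k → ∀ i, p ∣ c i)
    (j : ℕ) : ∀ {m : ℕ} (b : Fin m → ℚ[X]), p ^ (k * j + 1) ∣ ∑ i, b i ^ k →
    ∀ i, p ^ (j + 1) ∣ b i := by
  induction j with
  | zero =>
    intro m b h i
    simpa using base b (by simpa using h) i
  | succ j ih =>
    intro m b h i
    have h' : p ^ (k * j + 1) ∣ ∑ i, b i ^ k :=
      (pow_dvd_pow p (by nlinarith)).trans h
    have hd : ∀ i, p ^ (j + 1) ∣ b i := ih b h'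
    set c : Fin m → ℚ[X] := fun i => (hd i).choose with hc
    have hbc : ∀ i, b i = p ^ (j + 1) * c i := fun i => (hd i).choose_spec
    have hsum : ∑ i, b i ^ k = p ^ (k * (j + 1)) * ∑ i, c i ^ k := by
      rw [Finset.mul_sum]
      refine Finset.sum_congr rfl fun i _ => ?_
      rw [hbc i, mul_pow, ← pow_mul, mul_comm (j+1) k]
    have hpc : p ∣ ∑ i, c i ^ k := by
      have : p ^ (k * (j + 1)) * p ∣ p ^ (k * (j + 1)) * ∑ i, c i ^ k := by
        rw [← hsum, ← pow_succ]; exact h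
      exact (mul_dvd_mul_iff_left (pow_ne_zero _ hp0)).mp this
    have := base c hpc i
    rw [hbc i, pow_succ]
    exact mul_dvd_mul_left _ this

private lemma clear_denoms {r : ℕ} (a : Fin r → RatFunc ℚ) (f : ℚ[X])
    (h : algebraMap ℚ[X] (RatFunc ℚ) f = ∑ i, a i ^ 4) :
    ∃ (D : ℚ[X]) (c : Fin r → ℚ[X]), D ≠ 0 ∧ D ^ 4 * f = ∑ i, c i ^ 4 := by
  set D : ℚ[X] := ∏ i, (a i).denom with hD
  have hD0 : D ≠ 0 := Finset.prod_ne_zero_iff.mpr fun i _ => RatFunc.denom_ne_zero _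
  refine ⟨D, fun i => (a i).num * ∏ j ∈ Finset.univ.erase i, (a j).denom, hD0, ?_⟩
  apply IsFractionRing.injective ℚ[X] (RatFunc ℚ)
  have key : ∀ i : Fin r,
      algebraMap ℚ[X] (RatFunc ℚ) ((a i).num * ∏ j ∈ Finset.univ.erase i, (a j).denom)
      = a i * algebraMap ℚ[X] (RatFunc ℚ) D := by
    intro i
    have hsplit : D = (a i).denom * ∏ j ∈ Finset.univ.erase i, (a j).denom := by
      rw [hD, ← Finset.prod_erase_mul Finset.univ _ (Finset.mem_univ i), mul_comm]
    have hnum : algebraMap ℚ[X] (RatFunc ℚ) (a i).num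
        = a i * algebraMap ℚ[X] (RatFunc ℚ) (a i).denom := by
      exact (div_eq_iff (RatFunc.algebraMap_ne_zero (RatFunc.denom_ne_zero (a i)))).mp
        (RatFunc.num_div_denom (a i))
    rw [hsplit, map_mul, map_mul, hnum]; ring
  rw [map_mul, map_pow, h, map_sum, Finset.mul_sum]
  refine Finset.sum_congr rfl fun i _ => ?_
  rw [← mul_pow, map_pow, key i, mul_pow]; ring

theorem minpoly_fourth_power_divides (f : ℚ[X])
    (hsum4 : ∃ (r : ℕ) (a : Fin r → RatFunc ℚ),
      algebraMap ℚ[X] (RatFunc ℚ) f = ∑ i, a i ^ 4)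
    (n : ℕ) (b : Fin n → ℚ[X]) (hsq : f = ∑ i, b i ^ 2)
    (γ : ℝ) (hγ : IsIntegral ℚ γ) (hroot : Polynomial.aeval γ f = 0) :
    (∀ i, minpoly ℚ γ ^ 2 ∣ b i) ∧ minpoly ℚ γ ^ 4 ∣ f := by
  set p : ℚ[X] := minpoly ℚ γ with hpdef
  have hp0 : p ≠ 0 := minpoly.ne_zero hγ
  have hprime : Prime p := (minpoly.irreducible hγ).prime
  have base2 : ∀ {m : ℕ} (c : Fin m → ℚ[X]), p ∣ ∑ i, c i ^ 2 → ∀ i, p ∣ c i :=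
    fun c h => base_dvd γ c (by norm_num) (by norm_num) h
  have base4 : ∀ {m : ℕ} (c : Fin m → ℚ[X]), p ∣ ∑ i, c i ^ 4 → ∀ i, p ∣ c i :=
    fun c h => base_dvd γ c ⟨2, rfl⟩ (by norm_num) h
  have hpf : p ∣ f := minpoly.dvd ℚ γ hroot
  have h4 : p ^ 4 ∣ f := by
    rcases eq_or_ne f 0 with rfl | hf0
    · exact dvd_zero _
    obtain ⟨r, a, ha⟩ := hsum4
    obtain ⟨D, c, hD0, hDf⟩ := clear_denoms a f ha
    have hg0 : D ^ 4 * f ≠ 0 := mul_ne_zero (pow_ne_zero _ hD0) hf0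
    have hfin : FiniteMultiplicity p (D ^ 4 * f) :=
      FiniteMultiplicity.of_prime_left hprime hg0
    have key : ∀ j, p ^ (4 * j + 1) ∣ D ^ 4 * f → p ^ (4 * (j + 1)) ∣ D ^ 4 * f := by
      intro j hj
      rw [hDf] at hj ⊢
      have hc := pow_dvd_of_dvd_sum p hp0 4 base4 j c hj
      refine Finset.dvd_sum fun i _ => ?_
      have : (p ^ (j + 1)) ^ 4 ∣ (c i) ^ 4 := pow_dvd_pow_of_dvd (hc i) 4
      rwa [← pow_mul, mul_comm (j+1) 4] at this
    have h4v : 4 ∣ multiplicity p (D ^ 4 * f) := by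
      set v := multiplicity p (D ^ 4 * f) with hv
      by_contra hnd
      have hmod : v % 4 ≠ 0 := fun hh => hnd (Nat.dvd_of_mod_eq_zero hh)
      have h1 : 4 * (v / 4) + 1 ≤ v := by omega
      have h2 := key (v / 4) (pow_dvd_of_le_multiplicity h1)
      have h3 := hfin.le_multiplicity_of_pow_dvd h2
      omega
    have hffin : FiniteMultiplicity p f := FiniteMultiplicity.of_prime_left hprime hf0
    have hmul : multiplicity p (D ^ 4 * f)
        = multiplicity p (D ^ 4) + multiplicity p f := multiplicity_mul hprime hfin
    have hDpow : multiplicity p (D ^ 4) = 4 * multiplicity p D :=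
      (FiniteMultiplicity.of_prime_left hprime hD0).multiplicity_pow hprime
    have hvf1 : 0 < multiplicity p f := dvd_iff_multiplicity_pos.mpr hpf
    have hle : 4 ≤ multiplicity p f := by omega
    exact pow_dvd_of_le_multiplicity hle
  refine ⟨fun i => ?_, h4⟩
  have h3 : p ^ (2 * 1 + 1) ∣ ∑ i, b i ^ 2 := by
    rw [← hsq]; exact (pow_dvd_pow p (by norm_num)).trans h4
  exact pow_dvd_of_dvd_sum p hp0 2 base2 1 b h3 i
end
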